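/- Suppose the test with confidence regions (𝓕_N) is uniformly consistent for F, c is equicontinuous in x over Ξ and c(x;·) is continuous on Ξ with E_F|c(x;ξ)| < ∞ for each x ∈ X, and either Ξ is bounded, or there exists a continuous φ : Ξ → [0,∞) such that almost surely sup_{F₀∈𝓕_N} |E_{F₀}[φ(ξ)] − (1/N)Σ_{i=1}^N φ(ξ^i)| → 0 and, for each x ∈ X, |c(x;ξ)| = O(φ(ξ)). Then almost surely the following holds: for every x ∈ X and every sequence (G_N) of Borel probability measures with G_N ∈ 𝓕_N for every N, one has E_{G_N}[c(x;ξ)] → E_F[c(x;ξ)]. -/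

import Mathlib

open MeasureTheory Filter Topology
open scoped ENNReal

lemma stmt8_ae_mem {α : Type*} [MeasurableSpace α] (μ : Measure α) {s : Set α}
    (h : μ sᶜ = 0) : ∀ᵐ a ∂μ, a ∈ s := by
  rw [ae_iff]; simpa [Set.compl_def] using h

lemma stmt8_integral_congr {α : Type*} [MeasurableSpace α] (μ : Measure α) {s : Set α}
    (h : μ sᶜ = 0) {f g : α → ℝ} (hfg : ∀ a ∈ s, f a = g a) :
    ∫ a, f a ∂μ = ∫ a, g a ∂μ := by
  apply integral_congr_ae
  filter_upwards [stmt8_ae_mem μ h] with a ha using hfg a ha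

lemma stmt8_key {d : ℕ} (Ξ : Set (EuclideanSpace ℝ (Fin d))) (hΞ : IsClosed Ξ)
    (F : ProbabilityMeasure (EuclideanSpace ℝ (Fin d))) (hF : F.toMeasure Ξᶜ = 0)
    (G : ℕ → ProbabilityMeasure (EuclideanSpace ℝ (Fin d))) (hG : ∀ N, (G N).toMeasure Ξᶜ = 0)
    (c0 : EuclideanSpace ℝ (Fin d) → ℝ) (hc : ContinuousOn c0 Ξ)
    (hFi : Integrable c0 F.toMeasure) (hGi : ∀ N, Integrable c0 (G N).toMeasure)
    (Φ : EuclideanSpace ℝ (Fin d) → ℝ) (hΦc : Continuous Φ) (hΦ0 : ∀ ζ, 0 ≤ Φ ζ)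
    (hΦF : Integrable Φ F.toMeasure) (hΦG : ∀ N, Integrable Φ (G N).toMeasure)
    (hW : Tendsto G atTop (𝓝 F))
    (hΦconv : Tendsto (fun N => ∫ ζ, Φ ζ ∂(G N).toMeasure) atTop (𝓝 (∫ ζ, Φ ζ ∂F.toMeasure)))
    (ν η : ℝ) (hν : 0 ≤ ν) (hη : 0 < η) (hb : ∀ ζ ∈ Ξ, |c0 ζ| ≤ ν + η * Φ ζ) :
    Tendsto (fun N => ∫ ζ, c0 ζ ∂(G N).toMeasure) atTop (𝓝 (∫ ζ, c0 ζ ∂F.toMeasure)) := by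
  -- continuous extension of `c0`
  obtain ⟨C, hC⟩ := ContinuousMap.exists_restrict_eq (Y := ℝ) hΞ ⟨Ξ.restrict c0, hc.restrict⟩
  have hCeq : ∀ ζ ∈ Ξ, C ζ = c0 ζ := fun ζ hζ => ContinuousMap.congr_fun hC ⟨ζ, hζ⟩
  refine Metric.tendsto_nhds.mpr fun ε hε => ?_
  have hε8 : 0 < ε / (8 * η) := by positivity
  -- choose a truncation level
  have hdom : Tendsto (fun M : ℕ => ∫ ζ, min (Φ ζ) M ∂F.toMeasure) atTop
      (𝓝 (∫ ζ, Φ ζ ∂F.toMeasure)) := by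
    refine tendsto_integral_of_dominated_convergence Φ
      (fun n => (hΦc.min continuous_const).aestronglyMeasurable) hΦF (fun n => ?_) ?_
    · filter_upwards with ζ
      rw [Real.norm_eq_abs, abs_of_nonneg (le_min (hΦ0 ζ) (by positivity))]
      exact min_le_left _ _
    · filter_upwards with ζ
      refine tendsto_atTop_of_eventually_const (i₀ := ⌈Φ ζ⌉₊) fun n hn => ?_
      exact min_eq_left ((Nat.le_ceil _).trans (by exact_mod_cast hn))
  obtain ⟨M0, hM0⟩ := Metric.tendsto_atTop.mp hdom (ε / (8 * η)) hε8
  set ψ : EuclideanSpace ℝ (Fin d) → ℝ := fun ζ => min (Φ ζ) (M0 : ℝ) with hψdef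
  have hMd : |∫ ζ, ψ ζ ∂F.toMeasure - ∫ ζ, Φ ζ ∂F.toMeasure| < ε / (8 * η) := by
    have := hM0 M0 le_rfl; rwa [Real.dist_eq] at this
  have hM0' : (0:ℝ) ≤ (M0 : ℝ) := Nat.cast_nonneg _
  set L : ℝ := ν + η * M0 with hLdef
  have hL0 : 0 ≤ L := by positivity
  set f : EuclideanSpace ℝ (Fin d) → ℝ := fun ζ => max (-L) (min L (C ζ)) with hfdef
  have hfcont : Continuous f := continuous_const.max (continuous_const.min C.continuous)
  have hfb : ∀ ζ, ‖f ζ‖ ≤ L := by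
    intro ζ
    rw [Real.norm_eq_abs, abs_le]
    exact ⟨le_max_left _ _, max_le (by linarith) (min_le_left _ _)⟩
  have hψcont : Continuous ψ := hΦc.min continuous_const
  have hψb : ∀ ζ, ‖ψ ζ‖ ≤ (M0 : ℝ) := by
    intro ζ
    rw [Real.norm_eq_abs, abs_of_nonneg (le_min (hΦ0 ζ) hM0')]
    exact min_le_right _ _
  have hWf := ProbabilityMeasure.tendsto_iff_forall_integral_tendsto.mp hW
    (BoundedContinuousFunction.ofNormedAddCommGroup f hfcont L hfb)
  have hWψ := ProbabilityMeasure.tendsto_iff_forall_integral_tendsto.mp hW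
    (BoundedContinuousFunction.ofNormedAddCommGroup ψ hψcont (M0 : ℝ) hψb)
  simp only [BoundedContinuousFunction.coe_ofNormedAddCommGroup] at hWf hWψ
  -- pointwise truncation estimate on Ξ
  have hpt : ∀ ζ ∈ Ξ, |c0 ζ - f ζ| ≤ η * (Φ ζ - ψ ζ) := by
    intro ζ hζ
    have hψle : ψ ζ ≤ Φ ζ := min_le_left _ _
    have hfval : f ζ = max (-L) (min L (c0 ζ)) := by rw [hfdef]; simp [hCeq ζ hζ]
    have hbd := hb ζ hζ
    rcases le_or_gt (c0 ζ) L with h1 | h1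
    · rcases le_or_gt (-L) (c0 ζ) with h2 | h2
      · have hfc : f ζ = c0 ζ := by rw [hfval, min_eq_right h1, max_eq_right h2]
        rw [hfc, sub_self, abs_zero]
        nlinarith
      · -- c0 ζ < -L
        have habs : L < |c0 ζ| := by rw [abs_of_neg (by linarith)]; linarith
        have hΦM : (M0:ℝ) < Φ ζ := by
          rcases abs_cases (c0 ζ) with ⟨he, _⟩ | ⟨he, _⟩ <;> nlinarith
        have hψM : ψ ζ = (M0:ℝ) := min_eq_right hΦM.le
        have hfc : f ζ = -L := by
          rw [hfval, min_eq_right (by linarith), max_eq_left (by linarith)]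
        rw [hfc, hψM, abs_of_nonpos (by linarith)]
        have he : |c0 ζ| = -(c0 ζ) := abs_of_neg (by linarith)
        nlinarith
    · have habs : L < |c0 ζ| := lt_of_lt_of_le h1 (le_abs_self _)
      have hΦM : (M0:ℝ) < Φ ζ := by
        rcases abs_cases (c0 ζ) with ⟨he, _⟩ | ⟨he, _⟩ <;> nlinarith
      have hψM : ψ ζ = (M0:ℝ) := min_eq_right hΦM.le
      have hfc : f ζ = L := by
        rw [hfval, min_eq_left h1.le, max_eq_right (by linarith)]
      rw [hfc, hψM, abs_of_nonneg (by linarith)]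
      have he : |c0 ζ| = c0 ζ := abs_of_pos (by linarith)
      nlinarith
  -- integral estimate for measures supported on Ξ
  have est : ∀ (μ : Measure (EuclideanSpace ℝ (Fin d))), IsProbabilityMeasure μ → μ Ξᶜ = 0 →
      Integrable c0 μ → Integrable Φ μ →
      |∫ ζ, c0 ζ ∂μ - ∫ ζ, f ζ ∂μ| ≤ η * (∫ ζ, Φ ζ ∂μ - ∫ ζ, ψ ζ ∂μ) := by
    intro μ hμp hμs hμc hμΦ
    haveI := hμp
    have hfint : Integrable f μ :=
      (BoundedContinuousFunction.ofNormedAddCommGroup f hfcont L hfb).integrable μ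
    have hψint : Integrable ψ μ :=
      (BoundedContinuousFunction.ofNormedAddCommGroup ψ hψcont (M0:ℝ) hψb).integrable μ
    rw [← integral_sub hμc hfint]
    have h2 : |∫ ζ, (c0 ζ - f ζ) ∂μ| ≤ ∫ ζ, |c0 ζ - f ζ| ∂μ := by
      simpa [Real.norm_eq_abs] using
        norm_integral_le_integral_norm (μ := μ) (fun ζ => c0 ζ - f ζ)
    refine h2.trans ?_
    have h3 : ∫ ζ, |c0 ζ - f ζ| ∂μ ≤ ∫ ζ, η * (Φ ζ - ψ ζ) ∂μ := by
      refine integral_mono_ae (hμc.sub hfint).abs ((hμΦ.sub hψint).const_mul η) ?_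
      filter_upwards [stmt8_ae_mem μ hμs] with ζ hζ using hpt ζ hζ
    refine h3.trans_eq ?_
    rw [integral_const_mul, integral_sub hμΦ hψint]
  have hFest := est F.toMeasure inferInstance hF hFi hΦF
  have hgapF : ∫ ζ, Φ ζ ∂F.toMeasure - ∫ ζ, ψ ζ ∂F.toMeasure < ε / (8 * η) := by
    calc ∫ ζ, Φ ζ ∂F.toMeasure - ∫ ζ, ψ ζ ∂F.toMeasure
        ≤ |∫ ζ, Φ ζ ∂F.toMeasure - ∫ ζ, ψ ζ ∂F.toMeasure| := le_abs_self _
      _ = |∫ ζ, ψ ζ ∂F.toMeasure - ∫ ζ, Φ ζ ∂F.toMeasure| := abs_sub_comm _ _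
      _ < ε / (8 * η) := hMd
  -- eventual bounds
  have E1 : ∀ᶠ N in atTop,
      |∫ ζ, Φ ζ ∂(G N).toMeasure - ∫ ζ, Φ ζ ∂F.toMeasure| < ε / (8 * η) := by
    have := Metric.tendsto_nhds.mp hΦconv _ hε8
    simpa [Real.dist_eq] using this
  have E2 : ∀ᶠ N in atTop,
      |∫ ζ, ψ ζ ∂(G N).toMeasure - ∫ ζ, ψ ζ ∂F.toMeasure| < ε / (8 * η) := by
    have := Metric.tendsto_nhds.mp hWψ _ hε8
    simpa [Real.dist_eq] using this
  have E3 : ∀ᶠ N in atTop,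
      |∫ ζ, f ζ ∂(G N).toMeasure - ∫ ζ, f ζ ∂F.toMeasure| < ε / 8 := by
    have := Metric.tendsto_nhds.mp hWf (ε / 8) (by positivity)
    simpa [Real.dist_eq] using this
  filter_upwards [E1, E2, E3] with N h1 h2 h3
  rw [Real.dist_eq]
  have hGest := est (G N).toMeasure inferInstance (hG N) (hGi N) (hΦG N)
  have tri : |∫ ζ, c0 ζ ∂(G N).toMeasure - ∫ ζ, c0 ζ ∂F.toMeasure| ≤
      |∫ ζ, c0 ζ ∂(G N).toMeasure - ∫ ζ, f ζ ∂(G N).toMeasure| +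
      |∫ ζ, f ζ ∂(G N).toMeasure - ∫ ζ, f ζ ∂F.toMeasure| +
      |∫ ζ, f ζ ∂F.toMeasure - ∫ ζ, c0 ζ ∂F.toMeasure| := by
    have t1 := abs_sub_le (∫ ζ, c0 ζ ∂(G N).toMeasure) (∫ ζ, f ζ ∂(G N).toMeasure)
      (∫ ζ, c0 ζ ∂F.toMeasure)
    have t2 := abs_sub_le (∫ ζ, f ζ ∂(G N).toMeasure) (∫ ζ, f ζ ∂F.toMeasure)
      (∫ ζ, c0 ζ ∂F.toMeasure)
    linarith
  have m1 : η * (∫ ζ, Φ ζ ∂(G N).toMeasure - ∫ ζ, ψ ζ ∂(G N).toMeasure)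
      ≤ η * (3 * (ε / (8 * η))) := by
    refine mul_le_mul_of_nonneg_left ?_ hη.le
    have a1 := le_abs_self (∫ ζ, Φ ζ ∂(G N).toMeasure - ∫ ζ, Φ ζ ∂F.toMeasure)
    have a2 := neg_abs_le (∫ ζ, ψ ζ ∂(G N).toMeasure - ∫ ζ, ψ ζ ∂F.toMeasure)
    linarith
  have hmul1 : η * (3 * (ε / (8 * η))) = 3 * ε / 8 := by
    field_simp
  have m2 : η * (∫ ζ, Φ ζ ∂F.toMeasure - ∫ ζ, ψ ζ ∂F.toMeasure) ≤ η * (ε / (8 * η)) :=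
    mul_le_mul_of_nonneg_left hgapF.le hη.le
  have hmul2 : η * (ε / (8 * η)) = ε / 8 := by field_simp
  have hcomm : |∫ ζ, f ζ ∂F.toMeasure - ∫ ζ, c0 ζ ∂F.toMeasure|
      = |∫ ζ, c0 ζ ∂F.toMeasure - ∫ ζ, f ζ ∂F.toMeasure| := abs_sub_comm _ _
  linarith

/-- convergence of expectations along sequences in the confidence
regions of a uniformly consistent test.
Suppose the test with confidence regions `𝓕 N ω` is uniformly consistent for `F`, the
cost family is equicontinuous in `x` and continuous in `ξ` with `E_F|c(x;ξ)| < ∞`, and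
either `Ξ` is bounded or there is a growth function `φ` whose expectations are uniformly
close over `𝓕_N` to its empirical averages with `|c(x;·)| = O(φ)`.  Then almost surely,
for every `x ∈ X` and every sequence `G_N ∈ 𝓕_N`, `E_{G_N}[c(x;ξ)] → E_F[c(x;ξ)]`. -/
theorem stmt8 {d dx : ℕ} {Ω : Type*} [MeasurableSpace Ω]
    (P : Measure Ω) [IsProbabilityMeasure P]
    (Ξ : Set (EuclideanSpace ℝ (Fin d))) (hΞ : IsClosed Ξ)
    (X : Set (EuclideanSpace ℝ (Fin dx))) (hXne : X.Nonempty)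
    (F : ProbabilityMeasure (EuclideanSpace ℝ (Fin d))) (hFsupp : F.toMeasure Ξᶜ = 0)
    -- i.i.d. data drawn from `F`
    (ξ : ℕ → Ω → EuclideanSpace ℝ (Fin d)) (hξmeas : ∀ i, Measurable (ξ i))
    (hiid : ProbabilityTheory.iIndepFun ξ P)
    (hdist : ∀ i, Measure.map (ξ i) P = F.toMeasure)
    -- the data-dependent confidence regions
    (𝓕 : ℕ → Ω → Set (ProbabilityMeasure (EuclideanSpace ℝ (Fin d))))
    (h𝓕ne : ∀ N ω, (𝓕 N ω).Nonempty)
    (h𝓕supp : ∀ N ω, ∀ G ∈ 𝓕 N ω, G.toMeasure Ξᶜ = 0)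
    -- the cost function
    (c : EuclideanSpace ℝ (Fin dx) → EuclideanSpace ℝ (Fin d) → ℝ)
    (hcmeas : ∀ x ∈ X, Measurable (c x))
    -- uniform consistency
    (hUC : ∀ᵐ ω ∂P, ∀ G : ℕ → ProbabilityMeasure (EuclideanSpace ℝ (Fin d)),
      (∀ N, (G N).toMeasure Ξᶜ = 0) → ¬ Tendsto G atTop (𝓝 F) →
        ∃ᶠ N in atTop, G N ∉ 𝓕 N ω)
    -- equicontinuity in `x`, continuity in `ξ`, integrability under `F` and over `𝓕_N`
    (hequi : ∀ x ∈ X, ∀ ε > (0:ℝ), ∃ δ > (0:ℝ), ∀ x' ∈ X, ‖x - x'‖ < δ →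
      ∀ ζ ∈ Ξ, |c x ζ - c x' ζ| < ε)
    (hcont : ∀ x ∈ X, ContinuousOn (c x) Ξ)
    (hFint : ∀ x ∈ X, Integrable (c x) F.toMeasure)
    (h𝓕int : ∀ N ω, ∀ G ∈ 𝓕 N ω, ∀ x ∈ X, Integrable (c x) G.toMeasure)
    -- `Ξ` bounded, or growth control via `φ`
    (hgrow : Bornology.IsBounded Ξ ∨
      ∃ φ : EuclideanSpace ℝ (Fin d) → ℝ, ContinuousOn φ Ξ ∧ (∀ ζ ∈ Ξ, 0 ≤ φ ζ) ∧
        Integrable φ F.toMeasure ∧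
        (∀ N ω, ∀ G ∈ 𝓕 N ω, Integrable φ G.toMeasure) ∧
        (∀ᵐ ω ∂P, ∀ ε > (0:ℝ), ∀ᶠ N in atTop, ∀ G ∈ 𝓕 N ω,
          |∫ ζ, φ ζ ∂G.toMeasure - (∑ i ∈ Finset.range N, φ (ξ i ω)) / N| ≤ ε) ∧
        (∀ x ∈ X, ∃ ν η : ℝ, ∀ ζ ∈ Ξ, |c x ζ| ≤ ν + η * φ ζ)) :
    ∀ᵐ ω ∂P, ∀ x ∈ X, ∀ G : ℕ → ProbabilityMeasure (EuclideanSpace ℝ (Fin d)),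
      (∀ N, (G N).toMeasure Ξᶜ = 0) → (∀ N, G N ∈ 𝓕 N ω) →
        Tendsto (fun N => ∫ ζ, c x ζ ∂(G N).toMeasure) atTop
          (𝓝 (∫ ζ, c x ζ ∂F.toMeasure)) := by
  classical
  -- reduce the bounded case to the growth case
  obtain ⟨φ, hφc, hφ0, hφF, hφG, hφae, hφbd⟩ :
      ∃ φ : EuclideanSpace ℝ (Fin d) → ℝ, ContinuousOn φ Ξ ∧ (∀ ζ ∈ Ξ, 0 ≤ φ ζ) ∧
        Integrable φ F.toMeasure ∧
        (∀ N ω, ∀ G ∈ 𝓕 N ω, Integrable φ G.toMeasure) ∧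
        (∀ᵐ ω ∂P, ∀ ε > (0:ℝ), ∀ᶠ N in atTop, ∀ G ∈ 𝓕 N ω,
          |∫ ζ, φ ζ ∂G.toMeasure - (∑ i ∈ Finset.range N, φ (ξ i ω)) / N| ≤ ε) ∧
        (∀ x ∈ X, ∃ ν η : ℝ, ∀ ζ ∈ Ξ, |c x ζ| ≤ ν + η * φ ζ) := by
    rcases hgrow with hbdd | h
    · refine ⟨fun _ => 0, continuousOn_const, fun _ _ => le_refl 0, integrable_const 0,
        fun N ω G hG => integrable_const 0, ?_, ?_⟩
      · filter_upwards with ω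
        intro ε hε
        filter_upwards with N
        intro G hG
        simpa using hε.le
      · intro x hx
        obtain ⟨ν, hν⟩ := (Metric.isCompact_of_isClosed_isBounded hΞ
          hbdd).exists_bound_of_continuousOn (hcont x hx)
        exact ⟨ν, 0, fun ζ hζ => by simpa using hν ζ hζ⟩
    · exact h
  -- continuous nonnegative global extension `Φ` of `φ`
  obtain ⟨Φ₀, hΦ₀⟩ := ContinuousMap.exists_restrict_eq (Y := ℝ) hΞ ⟨Ξ.restrict φ, hφc.restrict⟩
  have hΦ₀eq : ∀ ζ ∈ Ξ, Φ₀ ζ = φ ζ := fun ζ hζ => ContinuousMap.congr_fun hΦ₀ ⟨ζ, hζ⟩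
  set Φ : EuclideanSpace ℝ (Fin d) → ℝ := fun ζ => max 0 (Φ₀ ζ) with hΦdef
  have hΦc : Continuous Φ := continuous_const.max Φ₀.continuous
  have hΦ0 : ∀ ζ, 0 ≤ Φ ζ := fun ζ => le_max_left _ _
  have hΦeq : ∀ ζ ∈ Ξ, Φ ζ = φ ζ := by
    intro ζ hζ
    rw [hΦdef]
    simp only
    rw [hΦ₀eq ζ hζ, max_eq_right (hφ0 ζ hζ)]
  have hΦm : Measurable Φ := hΦc.measurable
  have hΦF : Integrable Φ F.toMeasure := hφF.congr
    (by filter_upwards [stmt8_ae_mem _ hFsupp] with ζ hζ using (hΦeq ζ hζ).symm)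
  -- almost surely all data points lie in `Ξ`
  have A3 : ∀ᵐ ω ∂P, ∀ i, ξ i ω ∈ Ξ := by
    rw [ae_all_iff]
    intro i
    have hp : P ((ξ i) ⁻¹' Ξᶜ) = 0 := by
      rw [← Measure.map_apply (hξmeas i) hΞ.measurableSet.compl, hdist i]
      exact hFsupp
    rw [ae_iff]
    simpa [Set.preimage, Set.compl_def] using hp
  -- strong law of large numbers for `Φ ∘ ξ`
  have hident : ∀ i, ProbabilityTheory.IdentDistrib (fun ω => Φ (ξ i ω))
      (fun ω => Φ (ξ 0 ω)) P P := by
    intro i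
    have hi : ProbabilityTheory.IdentDistrib (ξ i) (ξ 0) P P :=
      ⟨(hξmeas i).aemeasurable, (hξmeas 0).aemeasurable, by rw [hdist i, hdist 0]⟩
    exact hi.comp hΦm
  have hintP : Integrable (fun ω => Φ (ξ 0 ω)) P := by
    have h1 : Integrable Φ (Measure.map (ξ 0) P) := by rw [hdist 0]; exact hΦF
    exact (integrable_map_measure hΦc.aestronglyMeasurable (hξmeas 0).aemeasurable).mp h1
  have hindep : Pairwise (Function.onFun (ProbabilityTheory.IndepFun · · P) fun i ω => Φ (ξ i ω)) :=
    fun i j hij => (hiid.indepFun hij).comp hΦm hΦm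
  have A4 := ProbabilityTheory.strong_law_ae_real (fun i ω => Φ (ξ i ω)) hintP hindep hident
  have hmean : (∫ a, Φ (ξ 0 a) ∂P) = ∫ ζ, Φ ζ ∂F.toMeasure := by
    rw [← hdist 0, integral_map (hξmeas 0).aemeasurable hΦc.aestronglyMeasurable]
  rw [hmean] at A4
  -- main argument
  filter_upwards [hUC, hφae, A3, A4] with ω h1 h2 h3 h4
  intro x hx G hGsupp hGmem
  -- weak convergence of the sequence
  have hW : Tendsto G atTop (𝓝 F) := by
    by_contra h
    obtain ⟨N, hN⟩ := (h1 G hGsupp h).exists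
    exact hN (hGmem N)
  -- integrability of `Φ` along the sequence
  have hΦG : ∀ N, Integrable Φ (G N).toMeasure := fun N =>
    (hφG N ω (G N) (hGmem N)).congr
      (by filter_upwards [stmt8_ae_mem _ (hGsupp N)] with ζ hζ using (hΦeq ζ hζ).symm)
  -- convergence of `Φ`-integrals along the sequence
  have hsum : ∀ n : ℕ, (∑ i ∈ Finset.range n, φ (ξ i ω)) = ∑ i ∈ Finset.range n, Φ (ξ i ω) :=
    fun n => Finset.sum_congr rfl fun i _ => (hΦeq _ (h3 i)).symm
  have hΦconv : Tendsto (fun N => ∫ ζ, Φ ζ ∂(G N).toMeasure) atTop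
      (𝓝 (∫ ζ, Φ ζ ∂F.toMeasure)) := by
    refine Metric.tendsto_nhds.mpr fun ε hε => ?_
    have hS : ∀ᶠ N in atTop,
        |(∑ i ∈ Finset.range N, Φ (ξ i ω)) / N - ∫ ζ, Φ ζ ∂F.toMeasure| < ε / 2 := by
      have := Metric.tendsto_nhds.mp h4 (ε / 2) (half_pos hε)
      simpa [Real.dist_eq] using this
    filter_upwards [h2 (ε / 2) (half_pos hε), hS] with N hE hSN
    have hGeq : ∫ ζ, φ ζ ∂(G N).toMeasure = ∫ ζ, Φ ζ ∂(G N).toMeasure :=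
      stmt8_integral_congr _ (hGsupp N) (fun ζ hζ => (hΦeq ζ hζ).symm)
    have hEN := hE (G N) (hGmem N)
    rw [hGeq, hsum N] at hEN
    rw [Real.dist_eq]
    calc |∫ ζ, Φ ζ ∂(G N).toMeasure - ∫ ζ, Φ ζ ∂F.toMeasure|
        ≤ |∫ ζ, Φ ζ ∂(G N).toMeasure - (∑ i ∈ Finset.range N, Φ (ξ i ω)) / N| +
          |(∑ i ∈ Finset.range N, Φ (ξ i ω)) / N - ∫ ζ, Φ ζ ∂F.toMeasure| :=
            abs_sub_le _ _ _
      _ < ε := by linarith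
  -- apply the key lemma
  obtain ⟨ν, η, hνη⟩ := hφbd x hx
  refine stmt8_key Ξ hΞ F hFsupp G hGsupp (c x) (hcont x hx) (hFint x hx)
    (fun N => h𝓕int N ω (G N) (hGmem N) x hx) Φ hΦc hΦ0 hΦF hΦG hW hΦconv
    (max ν 0) (max η 0 + 1) (le_max_right _ _) (by positivity) ?_
  intro ζ hζ
  have hb := hνη ζ hζ
  have hφnn := hφ0 ζ hζ
  rw [hΦeq ζ hζ]
  nlinarith [le_max_left ν 0, le_max_left η 0, le_max_right η 0]
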